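/- Let x be a uniformly distributed unit vector on the sphere S², and let λ be a unit vector on S² whose conditional density given x is |λ·x|/(2π) with respect to the uniform surface measure. Then the marginal distribution of λ is uniform on the sphere, and the mutual information I(x:λ) equals 1 − 1/(2 ln 2) ≈ 0.278 bits. -/

import Mathlib

open Real MeasureTheory Metric

/-- the unit sphere S² in ℝ³ -/
abbrev S2 : Set (EuclideanSpace ℝ (Fin 3)) := sphere (0 : EuclideanSpace ℝ (Fin 3)) 1

/-- the Euclidean inner product of two points of S² -/
noncomputable def dotS2 (x l : S2) : ℝ :=
  inner ℝ (x : EuclideanSpace ℝ (Fin 3)) (l : EuclideanSpace ℝ (Fin 3))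

/-- the uniform probability measure on S²: the surface measure
(obtained from Lebesgue measure via `Measure.toSphere`, of total mass 4π)
normalized by 1/(4π). -/
noncomputable def unifS2 : Measure S2 :=
  (ENNReal.ofReal (4 * Real.pi))⁻¹ •
    (volume : Measure (EuclideanSpace ℝ (Fin 3))).toSphere

open Set Filter
open scoped Pointwise
noncomputable section



abbrev E2' := EuclideanSpace ℝ (Fin 2)

def w : ℝ → ℝ := (Set.Ioc (0:ℝ) 1).indicator 1

lemma w_nonneg (r : ℝ) : 0 ≤ w r := by
  unfold w; by_cases h : r ∈ Set.Ioc (0:ℝ) 1 <;> simp [h]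

lemma w_le_one (r : ℝ) : w r ≤ 1 := by
  unfold w; by_cases h : r ∈ Set.Ioc (0:ℝ) 1 <;> simp [h]

lemma w_meas : Measurable w := by
  unfold w; exact (measurable_const.indicator measurableSet_Ioc)

-- L5
lemma ball2 : (volume (ball (0:E2') 1)).toReal = π := by
  rw [EuclideanSpace.volume_ball]
  have hcard : Fintype.card (Fin 2) = 2 := by simp
  rw [hcard]
  have h1 : ((2:ℕ):ℝ)/2 + 1 = 2 := by norm_num
  rw [h1, Real.Gamma_two]
  have h2 : Real.sqrt π ^ 2 = π := Real.sq_sqrt (le_of_lt Real.pi_pos)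
  rw [h2]
  simp [Real.pi_nonneg]

-- L6 pieces
lemma phi_image (t : ℝ) :
    (fun s : ℝ => Real.sqrt (s^2 + t^2)) '' Set.Ioi 0 = Set.Ioi |t| := by
  ext r
  simp only [Set.mem_image, Set.mem_Ioi]
  constructor
  · rintro ⟨s, hs, rfl⟩
    have : t^2 < s^2 + t^2 := by nlinarith
    calc |t| = Real.sqrt (t^2) := (Real.sqrt_sq_eq_abs t).symm
    _ < Real.sqrt (s^2 + t^2) := Real.sqrt_lt_sqrt (sq_nonneg t) this
  · intro hr
    have h0 : (0:ℝ) ≤ |t| := abs_nonneg t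
    have ht2 : t^2 < r^2 := by
      have := sq_abs t
      nlinarith
    refine ⟨Real.sqrt (r^2 - t^2), Real.sqrt_pos.mpr (by linarith), ?_⟩
    rw [Real.sq_sqrt (by linarith : (0:ℝ) ≤ r^2 - t^2)]
    rw [sub_add_cancel, Real.sqrt_sq (by linarith : (0:ℝ) ≤ r)]

lemma phi_inj (t : ℝ) : Set.InjOn (fun s : ℝ => Real.sqrt (s^2 + t^2)) (Set.Ioi 0) := by
  intro a ha b hb h
  simp only at h
  have ha' : (0:ℝ) < a := ha
  have hb' : (0:ℝ) < b := hb
  have h2 : a^2 + t^2 = b^2 + t^2 := by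
    have := congrArg (fun x : ℝ => x^2) h
    simpa [Real.sq_sqrt (by positivity : (0:ℝ) ≤ a^2 + t^2),
      Real.sq_sqrt (by positivity : (0:ℝ) ≤ b^2 + t^2)] using this
  nlinarith

lemma phi_deriv (t : ℝ) : ∀ s ∈ Set.Ioi (0:ℝ),
    HasDerivWithinAt (fun s : ℝ => Real.sqrt (s^2 + t^2))
      (s / Real.sqrt (s^2 + t^2)) (Set.Ioi 0) s := by
  intro s hs
  have hpos : (0:ℝ) < s^2 + t^2 := by have : (0:ℝ) < s := hs; positivity
  have h1 : HasDerivAt (fun s : ℝ => s^2 + t^2) (2*s) s := by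
    simpa using ((hasDerivAt_pow 2 s).add_const (t^2))
  have h2 := (Real.hasDerivAt_sqrt hpos.ne').comp s h1
  have : 1 / (2 * Real.sqrt (s^2+t^2)) * (2*s) = s / Real.sqrt (s^2+t^2) := by
    have : Real.sqrt (s^2+t^2) ≠ 0 := (Real.sqrt_pos.mpr hpos).ne'
    field_simp
  rw [this] at h2
  exact h2.hasDerivWithinAt

-- L6
lemma subst1 (f : ℝ → ℝ) (t : ℝ) :
    ∫ s in Set.Ioi (0:ℝ), s * (f (t / Real.sqrt (s^2 + t^2)) * w (Real.sqrt (s^2 + t^2)))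
      = ∫ r in Set.Ioi |t|, r * f (t/r) * w r := by
  rw [← phi_image t,
    integral_image_eq_integral_abs_deriv_smul measurableSet_Ioi (phi_deriv t) (phi_inj t)
      (fun r => r * f (t/r) * w r)]
  refine setIntegral_congr_fun measurableSet_Ioi (fun s hs => ?_)
  have hs' : (0:ℝ) < s := hs
  have hpos : (0:ℝ) < s^2 + t^2 := by positivity
  have hR : (0:ℝ) < Real.sqrt (s^2+t^2) := Real.sqrt_pos.mpr hpos
  simp only [smul_eq_mul]
  rw [abs_of_nonneg (by positivity : (0:ℝ) ≤ s / Real.sqrt (s^2+t^2))]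
  field_simp

def K (f : ℝ → ℝ) (t r : ℝ) : ℝ := if |t| < r then r * f (t/r) * w r else 0

lemma scale_image (r : ℝ) (hr : 0 < r) :
    (fun u : ℝ => r * u) '' Set.Ioo (-1) 1 = Set.Ioo (-r) r := by
  ext t
  simp only [Set.mem_image, Set.mem_Ioo]
  constructor
  · rintro ⟨u, ⟨h1, h2⟩, rfl⟩
    constructor <;> nlinarith
  · rintro ⟨h1, h2⟩
    exact ⟨t / r, ⟨by rw [lt_div_iff₀ hr]; linarith, by rw [div_lt_iff₀ hr]; linarith⟩,
      by field_simp⟩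

lemma subst2 (f : ℝ → ℝ) (r : ℝ) (hr : 0 < r) :
    ∫ t in Set.Ioo (-r) r, f (t/r) = r * ∫ u in Set.Ioo (-1:ℝ) 1, f u := by
  rw [← scale_image r hr,
    integral_image_eq_integral_abs_deriv_smul measurableSet_Ioo
      (fun u _ => (HasDerivAt.hasDerivWithinAt (by simpa using (hasDerivAt_id u).const_mul r :
        HasDerivAt (fun u : ℝ => r * u) r u)))
      (fun a _ b _ h => by
        simpa using mul_left_cancel₀ hr.ne' (by simpa using h))
      (fun t => f (t/r))]
  rw [← integral_const_mul]
  refine setIntegral_congr_fun measurableSet_Ioo (fun u _ => ?_)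
  simp only [smul_eq_mul]
  rw [abs_of_pos hr, mul_div_cancel_left₀ _ hr.ne']

-- L8
lemma K_int (f : ℝ → ℝ) (r : ℝ) :
    ∫ t, K f t r = (r^2 * w r) * ∫ u in Set.Ioo (-1:ℝ) 1, f u := by
  rcases le_or_gt r 0 with hr | hr
  · have h1 : ∀ t, K f t r = 0 := by
      intro t
      unfold K
      rw [if_neg]
      intro h
      exact absurd (lt_of_le_of_lt (abs_nonneg t) h) (not_lt.mpr hr)
    have h2 : w r = 0 := by
      have : r ∉ Set.Ioc (0:ℝ) 1 := fun h => absurd h.1 (not_lt.mpr hr)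
      exact Set.indicator_of_notMem this 1
    simp [h1, h2]
  · have h1 : (fun t => K f t r) = (Set.Ioo (-r) r).indicator (fun t => r * f (t/r) * w r) := by
      funext t
      unfold K
      rw [Set.indicator_apply]
      simp only [Set.mem_Ioo, ← abs_lt]
    rw [h1, integral_indicator measurableSet_Ioo]
    have : ∀ t ∈ Set.Ioo (-r) r, r * f (t/r) * w r = (r * w r) * f (t/r) := fun t _ => by ring
    rw [setIntegral_congr_fun measurableSet_Ioo this, integral_const_mul, subst2 f r hr]
    ring

-- L9
lemma rsq_int : ∫ r, r^2 * w r = 1/3 := by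
  have h1 : (fun r : ℝ => r^2 * w r) = (Set.Ioc (0:ℝ) 1).indicator (fun r => r^2) := by
    funext r
    unfold w
    by_cases h : r ∈ Set.Ioc (0:ℝ) 1 <;> simp [Set.indicator, h]
  rw [h1, integral_indicator measurableSet_Ioc,
    ← intervalIntegral.integral_of_le zero_le_one, integral_pow]
  norm_num

abbrev E3 := EuclideanSpace ℝ (Fin 3)

def Hf (f : ℝ → ℝ) : ℝ × (Fin 2 → ℝ) → ℝ := fun p =>
  f (p.1 / Real.sqrt (p.2 0 ^ 2 + p.2 1 ^ 2 + p.1 ^ 2)) *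
    w (Real.sqrt (p.2 0 ^ 2 + p.2 1 ^ 2 + p.1 ^ 2))

lemma norm_E3 (x : E3) : ‖x‖ = Real.sqrt (x 0 ^ 2 + x 1 ^ 2 + x 2 ^ 2) := by
  rw [EuclideanSpace.norm_eq]
  congr 1
  rw [Fin.sum_univ_three]
  simp [Real.norm_eq_abs, sq_abs]

lemma pointwiseH (f : ℝ → ℝ) (x : E3) :
    f (x 2 / ‖x‖) * w ‖x‖ =
      Hf f ((MeasurableEquiv.piFinSuccAbove (fun _ : Fin 3 => ℝ) 2)
        (((MeasurableEquiv.toLp 2 (Fin 3 → ℝ)).symm) x)) := by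
  have h0 : Fin.succAbove (2 : Fin 3) (0 : Fin 2) = 0 := by decide
  have h1 : Fin.succAbove (2 : Fin 3) (1 : Fin 2) = 1 := by decide
  simp only [Hf, MeasurableEquiv.piFinSuccAbove_apply, Fin.insertNthEquiv, Equiv.coe_fn_symm_mk,
    Fin.removeNth, MeasurableEquiv.toLp_symm_apply, h0, h1]
  rw [norm_E3]

lemma Hf_meas (f : ℝ → ℝ) (hf : Measurable f) : Measurable (Hf f) := by
  unfold Hf
  have hs : Measurable fun p : ℝ × (Fin 2 → ℝ) =>
      Real.sqrt (p.2 0 ^ 2 + p.2 1 ^ 2 + p.1 ^ 2) := by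
    have hsum : Measurable fun p : ℝ × (Fin 2 → ℝ) => p.2 0 ^ 2 + p.2 1 ^ 2 + p.1 ^ 2 :=
      ((((measurable_pi_apply 0).comp measurable_snd).pow_const 2).add
        (((measurable_pi_apply 1).comp measurable_snd).pow_const 2)).add
        (measurable_fst.pow_const 2)
    exact Real.continuous_sqrt.measurable.comp hsum
  exact ((hf.comp (measurable_fst.div hs)).mul (w_meas.comp hs))

lemma FF_meas (f : ℝ → ℝ) (hf : Measurable f) :
    Measurable (fun x : E3 => f (x 2 / ‖x‖) * w ‖x‖) := by
  have hn : Measurable fun x : E3 => ‖x‖ := continuous_norm.measurable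
  have hc : Measurable fun x : E3 => x 2 := by
    have : Continuous fun x : E3 => x 2 := by
      exact (continuous_apply 2).comp (PiLp.continuous_ofLp 2 fun _ : Fin 3 => ℝ)
    exact this.measurable
  exact (hf.comp (hc.div hn)).mul (w_meas.comp hn)

lemma FF_integrable (f : ℝ → ℝ) (hf : Measurable f) (C : ℝ) (hC : ∀ u, |f u| ≤ C) :
    Integrable (fun x : E3 => f (x 2 / ‖x‖) * w ‖x‖) := by
  have hC0 : 0 ≤ C := le_trans (abs_nonneg _) (hC 0)
  refine Integrable.mono' (g := (Metric.closedBall (0:E3) 1).indicator fun _ => C) ?_ 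
    (FF_meas f hf).aestronglyMeasurable (Filter.Eventually.of_forall fun x => ?_)
  · rw [integrable_indicator_iff measurableSet_closedBall]
    exact (integrableOn_const_iff (C := C) (by finiteness)).mpr (Or.inr measure_closedBall_lt_top)
  · rw [Real.norm_eq_abs]
    by_cases hx : ‖x‖ ≤ 1
    · have hmem : x ∈ Metric.closedBall (0:E3) 1 := by
        simpa [Metric.mem_closedBall, dist_zero_right] using hx
      rw [Set.indicator_of_mem hmem]
      calc |f (x 2 / ‖x‖) * w ‖x‖| = |f (x 2 / ‖x‖)| * |w ‖x‖| := abs_mul _ _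
      _ ≤ C * 1 := mul_le_mul (hC _) (by rw [abs_of_nonneg (w_nonneg _)]; exact w_le_one _)
          (abs_nonneg _) hC0
      _ = C := mul_one C
    · have hw : w ‖x‖ = 0 := by
        have : ‖x‖ ∉ Set.Ioc (0:ℝ) 1 := fun h => hx h.2
        exact Set.indicator_of_notMem this 1
      have hmem : x ∉ Metric.closedBall (0:E3) 1 := by
        simpa [Metric.mem_closedBall, dist_zero_right] using hx
      rw [Set.indicator_of_notMem hmem, hw, mul_zero, abs_zero]

lemma Hf_integrable (f : ℝ → ℝ) (hf : Measurable f) (C : ℝ) (hC : ∀ u, |f u| ≤ C) :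
    Integrable (Hf f) ((volume : Measure ℝ).prod (volume : Measure (Fin 2 → ℝ))) := by
  have hcomp : MeasurePreserving
      ((MeasurableEquiv.piFinSuccAbove (fun _ : Fin 3 => ℝ) 2) ∘
        ((MeasurableEquiv.toLp 2 (Fin 3 → ℝ)).symm)) volume volume :=
    (volume_preserving_piFinSuccAbove (fun _ : Fin 3 => ℝ) 2).comp
      (EuclideanSpace.volume_preserving_symm_measurableEquiv_toLp (Fin 3))
  have hemb : MeasurableEmbedding
      ((MeasurableEquiv.piFinSuccAbove (fun _ : Fin 3 => ℝ) 2) ∘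
        ((MeasurableEquiv.toLp 2 (Fin 3 → ℝ)).symm)) :=
    (MeasurableEquiv.piFinSuccAbove (fun _ : Fin 3 => ℝ) 2).measurableEmbedding.comp
      ((MeasurableEquiv.toLp 2 (Fin 3 → ℝ)).symm).measurableEmbedding
  have h1 : Integrable (Hf f ∘ ((MeasurableEquiv.piFinSuccAbove (fun _ : Fin 3 => ℝ) 2) ∘
      ((MeasurableEquiv.toLp 2 (Fin 3 → ℝ)).symm))) (volume : Measure E3) := by
    have : (Hf f ∘ ((MeasurableEquiv.piFinSuccAbove (fun _ : Fin 3 => ℝ) 2) ∘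
        ((MeasurableEquiv.toLp 2 (Fin 3 → ℝ)).symm))) = fun x : E3 => f (x 2 / ‖x‖) * w ‖x‖ := by
      funext x
      exact (pointwiseH f x).symm
    rw [this]
    exact FF_integrable f hf C hC
  have h2 := (hcomp.integrable_comp_emb hemb).mp h1
  rwa [← Measure.volume_eq_prod]


lemma K_integrable (f : ℝ → ℝ) (hf : Measurable f) (C : ℝ) (hC : ∀ u, |f u| ≤ C) :
    Integrable (Function.uncurry (K f)) ((volume : Measure ℝ).prod (volume : Measure ℝ)) := by
  have hC0 : 0 ≤ C := le_trans (abs_nonneg _) (hC 0)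
  have hmeas : Measurable (Function.uncurry (K f)) := by
    have hset : MeasurableSet {p : ℝ × ℝ | |p.1| < p.2} :=
      measurableSet_lt (measurable_fst.abs) measurable_snd
    have hb : Measurable fun p : ℝ × ℝ => p.2 * f (p.1 / p.2) * w p.2 :=
      (measurable_snd.mul (hf.comp (measurable_fst.div measurable_snd))).mul
        (w_meas.comp measurable_snd)
    exact Measurable.ite hset hb measurable_const
  refine Integrable.mono'
    (g := (Set.Icc (-1:ℝ) 1 ×ˢ Set.Icc (0:ℝ) 1).indicator fun _ => C) ?_
    hmeas.aestronglyMeasurable (Filter.Eventually.of_forall fun p => ?_)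
  · rw [integrable_indicator_iff (measurableSet_Icc.prod measurableSet_Icc)]
    refine (integrableOn_const_iff (C := C) (by finiteness)).mpr (Or.inr ?_)
    exact (isCompact_Icc.prod isCompact_Icc).measure_lt_top
  · rw [Real.norm_eq_abs]
    rcases p with ⟨t, r⟩
    show |K f t r| ≤ _
    unfold K
    by_cases hcond : |t| < r
    · rw [if_pos hcond]
      by_cases hr : r ∈ Set.Ioc (0:ℝ) 1
      · have hmem : (t, r) ∈ Set.Icc (-1:ℝ) 1 ×ˢ Set.Icc (0:ℝ) 1 := by
          constructor
          · have : |t| ≤ 1 := le_of_lt (lt_of_lt_of_le hcond hr.2)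
            exact abs_le.mp this
          · exact ⟨le_of_lt hr.1, hr.2⟩
        rw [Set.indicator_of_mem hmem]
        have hw1 : w r = 1 := by unfold w; rw [Set.indicator_of_mem hr]; rfl
        rw [hw1, mul_one, abs_mul]
        calc |r| * |f (t/r)| ≤ 1 * C := by
              refine mul_le_mul ?_ (hC _) (abs_nonneg _) zero_le_one
              rw [abs_of_pos hr.1]; exact hr.2
        _ = C := one_mul C
      · have hw0 : w r = 0 := Set.indicator_of_notMem hr 1
        rw [hw0, mul_zero, abs_zero]
        exact Set.indicator_nonneg (fun _ _ => hC0) _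
    · rw [if_neg hcond, abs_zero]
      exact Set.indicator_nonneg (fun _ _ => hC0) _

lemma innerInt (f : ℝ → ℝ) (t : ℝ) :
    ∫ y : Fin 2 → ℝ, Hf f (t, y) = 2 * π * ∫ r, K f t r := by
  have htrans := (EuclideanSpace.volume_preserving_symm_measurableEquiv_toLp (Fin 2)).integral_comp
    ((MeasurableEquiv.toLp 2 (Fin 2 → ℝ)).symm).measurableEmbedding
    (fun y : Fin 2 → ℝ => Hf f (t, y))
  rw [← htrans]
  have hpt : ∀ x : E2', Hf f (t, ((MeasurableEquiv.toLp 2 (Fin 2 → ℝ)).symm) x) =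
      f (t / Real.sqrt (‖x‖^2 + t^2)) * w (Real.sqrt (‖x‖^2 + t^2)) := by
    intro x
    have hn : ‖x‖^2 = x 0 ^ 2 + x 1 ^ 2 := by
      rw [EuclideanSpace.norm_eq, Real.sq_sqrt (by positivity)]
      rw [Fin.sum_univ_two]
      simp [Real.norm_eq_abs, sq_abs]
    simp only [Hf, MeasurableEquiv.toLp_symm_apply, hn]
  rw [integral_congr_ae (Filter.Eventually.of_forall hpt)]
  have hmain := integral_fun_norm_addHaar (volume : Measure E2')
    (fun s => f (t / Real.sqrt (s^2 + t^2)) * w (Real.sqrt (s^2 + t^2)))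
  rw [hmain]
  have hdim : Module.finrank ℝ E2' = 2 := finrank_euclideanSpace_fin
  rw [hdim, measureReal_def, ball2]
  simp only [smul_eq_mul, nsmul_eq_mul, Nat.cast_ofNat]
  norm_num
  have hK : ∫ r, K f t r = ∫ r in Set.Ioi |t|, r * f (t/r) * w r := by
    have : (fun r => K f t r) = (Set.Ioi |t|).indicator (fun r => r * f (t/r) * w r) := by
      funext r
      unfold K
      rw [Set.indicator_apply]
      simp only [Set.mem_Ioi]
    rw [this, integral_indicator measurableSet_Ioi]
  rw [hK, ← subst1 f t]
  ring

lemma stepB (f : ℝ → ℝ) (hf : Measurable f) (C : ℝ) (hC : ∀ u, |f u| ≤ C) :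
    ∫ x : E3, f (x 2 / ‖x‖) * w ‖x‖ =
      2 * π * (∫ u in Set.Ioo (-1:ℝ) 1, f u) * (1/3) := by
  have hcomp : MeasurePreserving
      ((MeasurableEquiv.piFinSuccAbove (fun _ : Fin 3 => ℝ) 2) ∘
        ((MeasurableEquiv.toLp 2 (Fin 3 → ℝ)).symm)) volume volume :=
    (volume_preserving_piFinSuccAbove (fun _ : Fin 3 => ℝ) 2).comp
      (EuclideanSpace.volume_preserving_symm_measurableEquiv_toLp (Fin 3))
  have hemb : MeasurableEmbedding
      ((MeasurableEquiv.piFinSuccAbove (fun _ : Fin 3 => ℝ) 2) ∘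
        ((MeasurableEquiv.toLp 2 (Fin 3 → ℝ)).symm)) :=
    (MeasurableEquiv.piFinSuccAbove (fun _ : Fin 3 => ℝ) 2).measurableEmbedding.comp
      ((MeasurableEquiv.toLp 2 (Fin 3 → ℝ)).symm).measurableEmbedding
  have h1 : ∫ x : E3, f (x 2 / ‖x‖) * w ‖x‖ =
      ∫ p : ℝ × (Fin 2 → ℝ), Hf f p ∂volume := by
    rw [← hcomp.integral_comp hemb (Hf f)]
    exact integral_congr_ae (Filter.Eventually.of_forall (fun x => pointwiseH f x))
  rw [h1, Measure.volume_eq_prod, integral_prod _ (Hf_integrable f hf C hC)]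
  have h2 : ∀ t : ℝ, ∫ y : Fin 2 → ℝ, Hf f (t, y) = 2 * π * ∫ r, K f t r :=
    innerInt f
  rw [integral_congr_ae (Filter.Eventually.of_forall h2), integral_const_mul,
    integral_integral_swap (K_integrable f hf C hC)]
  have h3 : ∀ r : ℝ, ∫ t, K f t r = (r^2 * w r) * ∫ u in Set.Ioo (-1:ℝ) 1, f u := K_int f
  rw [integral_congr_ae (Filter.Eventually.of_forall h3), integral_mul_const, rsq_int]
  ring

lemma wInt : ∫ r : Set.Ioi (0:ℝ), w r ∂(Measure.volumeIoiPow 2) = 1/3 := by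
  simp only [Measure.volumeIoiPow, ENNReal.ofReal]
  rw [integral_withDensity_eq_integral_smul
      ((measurable_subtype_coe.pow_const _).real_toNNReal)]
  rw [integral_subtype_comap measurableSet_Ioi (fun r : ℝ => (r^2).toNNReal • w r)]
  rw [setIntegral_congr_fun measurableSet_Ioi
      (g := fun r : ℝ => (Set.Ioc (0:ℝ) 1).indicator (fun r => r^2) r) ?heq]
  · rw [setIntegral_indicator measurableSet_Ioc]
    have : Set.Ioi (0:ℝ) ∩ Set.Ioc 0 1 = Set.Ioc 0 1 :=
      Set.inter_eq_right.mpr Set.Ioc_subset_Ioi_self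
    rw [this, ← intervalIntegral.integral_of_le zero_le_one, integral_pow]
    norm_num
  · intro r hr
    have h2 : (0:ℝ) ≤ r ^ 2 := sq_nonneg r
    show (r ^ 2).toNNReal • w r = _
    rw [NNReal.smul_def, Real.coe_toNNReal _ h2]
    by_cases h : r ∈ Set.Ioc (0:ℝ) 1 <;> simp [w, Set.indicator, h]

lemma stepA (f : ℝ → ℝ) :
    ∫ x : E3, f (x 2 / ‖x‖) * w ‖x‖ =
      (∫ ω : sphere (0:E3) 1, f ((ω : E3) 2) ∂(volume : Measure E3).toSphere) * (1/3) := by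
  have h1 : ∫ x : E3, f (x 2 / ‖x‖) * w ‖x‖ =
      ∫ x : ({0}ᶜ : Set E3), f ((x:E3) 2 / ‖(x:E3)‖) * w ‖(x:E3)‖
        ∂((volume : Measure E3).comap Subtype.val) := by
    rw [integral_subtype_comap (measurableSet_singleton _).compl
        (fun x : E3 => f (x 2 / ‖x‖) * w ‖x‖), restrict_compl_singleton]
  rw [h1]
  have h2 := (volume : Measure E3).measurePreserving_homeomorphUnitSphereProd.integral_comp
      (Homeomorph.measurableEmbedding _)
      (fun p : sphere (0:E3) 1 × Set.Ioi (0:ℝ) => f ((p.1 : E3) 2) * w p.2)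
  have h3 : ∀ x : ({0}ᶜ : Set E3),
      f ((x:E3) 2 / ‖(x:E3)‖) * w ‖(x:E3)‖ =
      (fun p : sphere (0:E3) 1 × Set.Ioi (0:ℝ) => f ((p.1 : E3) 2) * w p.2)
        (homeomorphUnitSphereProd E3 x) := by
    intro x
    simp only [homeomorphUnitSphereProd_apply_fst_coe, homeomorphUnitSphereProd_apply_snd_coe,
      PiLp.smul_apply, smul_eq_mul]
    rw [div_eq_inv_mul]
  calc ∫ x : ({0}ᶜ : Set E3), f ((x:E3) 2 / ‖(x:E3)‖) * w ‖(x:E3)‖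
        ∂((volume : Measure E3).comap Subtype.val)
      = ∫ x : ({0}ᶜ : Set E3),
          (fun p : sphere (0:E3) 1 × Set.Ioi (0:ℝ) => f ((p.1 : E3) 2) * w p.2)
            (homeomorphUnitSphereProd E3 x) ∂((volume : Measure E3).comap Subtype.val) := by
        exact integral_congr_ae (Filter.Eventually.of_forall h3)
    _ = ∫ p : sphere (0:E3) 1 × Set.Ioi (0:ℝ), f ((p.1 : E3) 2) * w p.2
          ∂((volume : Measure E3).toSphere.prod
            (Measure.volumeIoiPow (Module.finrank ℝ E3 - 1))) := h2
    _ = (∫ ω : sphere (0:E3) 1, f ((ω : E3) 2) ∂(volume : Measure E3).toSphere) * (1/3) := by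
        have hfr : Module.finrank ℝ E3 - 1 = 2 := by
          rw [finrank_euclideanSpace_fin]
        rw [hfr, integral_prod_mul (μ := (volume : Measure E3).toSphere)
          (ν := Measure.volumeIoiPow 2)
          (f := fun ω : sphere (0:E3) 1 => f ((ω : E3) 2))
          (g := fun r : Set.Ioi (0:ℝ) => w r), wInt]


lemma sphere_coord (f : ℝ → ℝ) (hf : Measurable f) (C : ℝ) (hC : ∀ u, |f u| ≤ C) :
    ∫ ω : sphere (0:E3) 1, f ((ω : E3) 2) ∂(volume : Measure E3).toSphere
      = 2 * π * ∫ u in Set.Ioo (-1:ℝ) 1, f u := by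
  have h := (stepA f).symm.trans (stepB f hf C hC)
  exact mul_right_cancel₀ (by norm_num : (1/3:ℝ) ≠ 0) h

lemma toSphere_rot (e : E3 ≃ₗᵢ[ℝ] E3) :
    Measure.map (fun ω : sphere (0:E3) 1 => (⟨e ω, by
        rw [mem_sphere_zero_iff_norm, e.norm_map]
        exact mem_sphere_zero_iff_norm.mp ω.2⟩ : sphere (0:E3) 1))
      (volume : Measure E3).toSphere = (volume : Measure E3).toSphere := by
  set eS : sphere (0:E3) 1 → sphere (0:E3) 1 := fun ω => ⟨e ω, by
    rw [mem_sphere_zero_iff_norm, e.norm_map]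
    exact mem_sphere_zero_iff_norm.mp ω.2⟩ with heS_def
  have heS : Continuous eS :=
    Continuous.subtype_mk (e.continuous.comp continuous_subtype_val) _
  refine Measure.ext fun s hs => ?_
  rw [Measure.map_apply heS.measurable hs,
    Measure.toSphere_apply' _ hs, Measure.toSphere_apply' _ (heS.measurable hs)]
  congr 1
  have hset : Subtype.val '' (eS ⁻¹' s) = e ⁻¹' (Subtype.val '' s) := by
    ext x
    simp only [Set.mem_image, Set.mem_preimage]
    constructor
    · rintro ⟨ω, hω, rfl⟩
      exact ⟨eS ω, hω, rfl⟩
    · rintro ⟨p, hp, hpx⟩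
      have hx : x ∈ sphere (0:E3) 1 := by
        rw [mem_sphere_zero_iff_norm, ← e.norm_map, ← hpx]
        exact mem_sphere_zero_iff_norm.mp p.2
      refine ⟨⟨x, hx⟩, ?_, rfl⟩
      have : eS ⟨x, hx⟩ = p := Subtype.ext hpx.symm
      rw [this]; exact hp
  rw [hset]
  have hsmul : Set.Ioo (0:ℝ) 1 • (e ⁻¹' (Subtype.val '' s)) =
      e ⁻¹' (Set.Ioo (0:ℝ) 1 • (Subtype.val '' s)) := by
    ext y
    simp only [Set.mem_smul, Set.mem_preimage]
    constructor
    · rintro ⟨c, hc, a, ha, rfl⟩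
      exact ⟨c, hc, e a, ha, (e.map_smul c a).symm⟩
    · rintro ⟨c, hc, bb, hbb, hy⟩
      refine ⟨c, hc, e.symm bb, by simpa using hbb, ?_⟩
      have h1 : c • e.symm bb = e.symm (c • bb) := (e.symm.map_smul c bb).symm
      rw [h1, hy]
      exact e.symm_apply_apply y
  rw [hsmul]
  exact e.measurePreserving.measure_preimage_emb
    e.toHomeomorph.measurableEmbedding _

lemma sphere_inner (f : ℝ → ℝ) (hf : Measurable f) (C : ℝ) (hC : ∀ u, |f u| ≤ C)
    (v : E3) (hv : ‖v‖ = 1) :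
    ∫ ω : sphere (0:E3) 1, f (inner ℝ (ω : E3) v) ∂(volume : Measure E3).toSphere
      = 2 * π * ∫ u in Set.Ioo (-1:ℝ) 1, f u := by
  have hcard : Module.finrank ℝ E3 = Fintype.card (Fin 3) := by
    simp [finrank_euclideanSpace_fin]
  have horth : Orthonormal ℝ (({2} : Set (Fin 3)).restrict (fun _ : Fin 3 => v)) := by
    rw [orthonormal_iff_ite]
    intro i j
    have hij : i = j := Subtype.ext (by
      have hi := i.2; have hj := j.2
      simp only [Set.mem_singleton_iff] at hi hj
      rw [hi, hj])
    subst hij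
    simp only [if_pos rfl, Set.restrict_apply]
    rw [real_inner_self_eq_norm_sq, show ({2} : Set (Fin 3)).restrict (fun _ : Fin 3 => v) i = v from rfl, hv]
    norm_num
  obtain ⟨b, hb⟩ := horth.exists_orthonormalBasis_extension_of_card_eq hcard
  have hbv : b 2 = v := hb 2 rfl
  set e : E3 ≃ₗᵢ[ℝ] E3 := b.repr with he_def
  set eS : sphere (0:E3) 1 → sphere (0:E3) 1 := fun ω => ⟨e ω, by
    rw [mem_sphere_zero_iff_norm, e.norm_map]
    exact mem_sphere_zero_iff_norm.mp ω.2⟩ with heS_def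
  have heS : Continuous eS :=
    Continuous.subtype_mk (e.continuous.comp continuous_subtype_val) _
  have hkey : ∀ ω : sphere (0:E3) 1, f (inner ℝ (ω:E3) v) = f (((eS ω : E3)) 2) := by
    intro ω
    congr 1
    have h1 : (inner ℝ (ω:E3) v : ℝ) = inner ℝ (e ω) (e v) := (e.inner_map_map _ _).symm
    have h2 : e v = EuclideanSpace.single 2 (1:ℝ) := by
      rw [← hbv]; exact b.repr_self 2
    rw [h1, h2, EuclideanSpace.inner_single_right]
    simp
    rfl
  have hg : Measurable (fun p : sphere (0:E3) 1 => f ((p : E3) 2)) := by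
    have hc : Continuous fun p : sphere (0:E3) 1 => (p : E3) 2 :=
      ((continuous_apply 2).comp (PiLp.continuous_ofLp 2 fun _ : Fin 3 => ℝ)).comp
        continuous_subtype_val
    exact hf.comp hc.measurable
  calc ∫ ω : sphere (0:E3) 1, f (inner ℝ (ω : E3) v) ∂(volume : Measure E3).toSphere
      = ∫ ω : sphere (0:E3) 1, (fun p : sphere (0:E3) 1 => f ((p : E3) 2)) (eS ω)
          ∂(volume : Measure E3).toSphere :=
        integral_congr_ae (Filter.Eventually.of_forall hkey)
    _ = ∫ p : sphere (0:E3) 1, f ((p : E3) 2)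
          ∂(Measure.map eS (volume : Measure E3).toSphere) :=
        (integral_map heS.measurable.aemeasurable hg.aestronglyMeasurable).symm
    _ = ∫ p : sphere (0:E3) 1, f ((p : E3) 2) ∂(volume : Measure E3).toSphere := by
        rw [toSphere_rot e]
    _ = 2 * π * ∫ u in Set.Ioo (-1:ℝ) 1, f u := sphere_coord f hf C hC


def cl (u : ℝ) : ℝ := min 1 (max (-1) u)

lemma cl_eq {u : ℝ} (h : |u| ≤ 1) : cl u = u := by
  rcases abs_le.mp h with ⟨h1, h2⟩
  unfold cl
  rw [max_eq_right h1, min_eq_right h2]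

lemma cl_abs_le (u : ℝ) : |cl u| ≤ 1 := by
  unfold cl
  rw [abs_le]
  constructor
  · exact le_min (by norm_num) (le_max_left _ _)
  · exact min_le_left _ _

lemma cl_meas : Measurable cl := measurable_const.min (measurable_const.max measurable_id)

-- tendsto helper
lemma tendsto_aux (n : ℕ) (hn : 0 < n) :
    Tendsto (fun u : ℝ => u^n * Real.log (2*u)) (nhdsWithin 0 (Set.Ioi 0)) (nhds 0) := by
  have h1 : Tendsto (fun u : ℝ => Real.log u * u ^ (n:ℝ)) (nhdsWithin 0 (Set.Ioi 0)) (nhds 0) :=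
    tendsto_log_mul_rpow_nhdsGT_zero (by exact_mod_cast hn)
  have h1' : Tendsto (fun u : ℝ => u^n * Real.log u) (nhdsWithin 0 (Set.Ioi 0)) (nhds 0) := by
    refine h1.congr' ?_
    filter_upwards [self_mem_nhdsWithin] with u hu
    rw [Real.rpow_natCast, mul_comm]
  have h2 : Tendsto (fun u : ℝ => u^n * Real.log 2) (nhdsWithin 0 (Set.Ioi 0)) (nhds 0) := by
    have : Tendsto (fun u : ℝ => u^n * Real.log 2) (nhds 0) (nhds (0^n * Real.log 2)) :=
      ((continuous_pow n).mul continuous_const).tendsto 0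
    rw [zero_pow hn.ne', zero_mul] at this
    exact this.mono_left nhdsWithin_le_nhds
  have h3 := h2.add h1'
  rw [add_zero] at h3
  refine h3.congr' ?_
  filter_upwards [self_mem_nhdsWithin] with u hu
  rw [Real.log_mul two_ne_zero (ne_of_gt hu)]
  ring

lemma contOn_psi : ContinuousOn (fun u : ℝ => 2 * u * Real.log (2*u)) (Set.Icc 0 1) := by
  intro x hx
  rcases eq_or_lt_of_le hx.1 with h0 | h0
  · -- x = 0
    subst h0
    have ht : Tendsto (fun u : ℝ => 2 * u * Real.log (2*u))
        (nhdsWithin 0 (Set.Ioi 0)) (nhds 0) := by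
      have := tendsto_aux 1 one_pos
      have h2 : Tendsto (fun u : ℝ => 2 * (u^1 * Real.log (2*u)))
          (nhdsWithin 0 (Set.Ioi 0)) (nhds (2*0)) := this.const_mul 2
      rw [mul_zero] at h2
      refine h2.congr (fun u => by ring)
    have : Tendsto (fun u : ℝ => 2 * u * Real.log (2*u))
        (nhdsWithin 0 (Set.Ici 0)) (nhds 0) := by
      rw [show Set.Ici (0:ℝ) = insert 0 (Set.Ioi 0) from Set.Ioi_insert.symm,
        nhdsWithin_insert]
      refine Tendsto.sup ?_ ht
      have h := tendsto_pure_nhds (fun u : ℝ => 2 * u * Real.log (2*u)) 0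
      simpa using h
    unfold ContinuousWithinAt
    have h0v : (fun u : ℝ => 2 * u * Real.log (2*u)) 0 = 0 := by simp
    rw [h0v]
    exact this.mono_left (nhdsWithin_mono 0 Set.Icc_subset_Ici_self)
  · -- x > 0
    have : ContinuousAt (fun u : ℝ => 2 * u * Real.log (2*u)) x := by
      have hlog : ContinuousAt (fun u : ℝ => Real.log (2*u)) x :=
        (Real.continuousAt_log (by positivity)).comp (by fun_prop)
      exact (continuousAt_const.mul continuousAt_id).mul hlog
    exact this.continuousWithinAt

lemma N_val : ∫ u in (0:ℝ)..1, 2 * u * Real.log (2*u) = Real.log 2 - 1/2 := by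
  have hderiv : ∀ x ∈ Set.Ioo (0:ℝ) 1,
      HasDerivAt (fun u : ℝ => u^2 * Real.log (2*u) - u^2/2) (2 * x * Real.log (2*x)) x := by
    intro x hx
    have hx0 : (0:ℝ) < x := hx.1
    have hlog : HasDerivAt (fun u : ℝ => Real.log (2*u)) (1/x) x := by
      have h1 : HasDerivAt (fun u : ℝ => 2*u) 2 x := by
        simpa using (hasDerivAt_id x).const_mul (2:ℝ)
      have h2 := (Real.hasDerivAt_log (by positivity : (2*x) ≠ 0)).comp x h1
      refine h2.congr_deriv ?_
      field_simp
    have hp : HasDerivAt (fun u : ℝ => u^2) (2*x) x := by simpa using hasDerivAt_pow 2 x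
    have hmul := hp.mul hlog
    have hsub := hmul.sub (hp.div_const 2)
    refine hsub.congr_deriv ?_
    field_simp
    ring
  have hcont : ContinuousOn (fun u : ℝ => u^2 * Real.log (2*u) - u^2/2) (Set.Icc 0 1) := by
    have h1 : ContinuousOn (fun u : ℝ => u * (2 * u * Real.log (2*u)) / 2) (Set.Icc 0 1) :=
      (continuousOn_id.mul contOn_psi).div_const 2
    have h2 : ContinuousOn (fun u : ℝ => u^2/2) (Set.Icc 0 1) :=
      ((continuous_pow 2).continuousOn).div_const 2
    refine (h1.sub h2).congr (fun u _ => ?_)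
    simp only [Pi.sub_apply]
    ring
  have hint : IntervalIntegrable (fun u : ℝ => 2 * u * Real.log (2*u)) volume 0 1 := by
    apply ContinuousOn.intervalIntegrable
    rw [Set.uIcc_of_le zero_le_one]
    exact contOn_psi
  have := intervalIntegral.integral_eq_sub_of_hasDerivAt_of_le zero_le_one hcont hderiv hint
  rw [this]
  norm_num

lemma J1_val : ∫ u in Set.Ioo (-1:ℝ) 1, 2 * |u| = 2 := by
  rw [← integral_Ioc_eq_integral_Ioo, ← intervalIntegral.integral_of_le (by norm_num : (-1:ℝ) ≤ 1)]
  have hi : ∀ a b : ℝ, IntervalIntegrable (fun u : ℝ => 2 * |u|) volume a b :=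
    fun a b => (continuous_const.mul continuous_abs).intervalIntegrable a b
  rw [← intervalIntegral.integral_add_adjacent_intervals (hi (-1) 0) (hi 0 1)]
  have h1 : ∫ u in (-1:ℝ)..0, 2 * |u| = 1 := by
    have : ∫ u in (-1:ℝ)..0, 2 * |u| = ∫ u in (-1:ℝ)..0, -(2*u) := by
      refine intervalIntegral.integral_congr (fun u hu => ?_)
      rw [Set.uIcc_of_le (by norm_num : (-1:ℝ) ≤ 0)] at hu
      rw [abs_of_nonpos hu.2]; ring
    rw [this, intervalIntegral.integral_neg, intervalIntegral.integral_const_mul,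
      integral_id]
    norm_num
  have h2 : ∫ u in (0:ℝ)..1, 2 * |u| = 1 := by
    have : ∫ u in (0:ℝ)..1, 2 * |u| = ∫ u in (0:ℝ)..1, 2*u := by
      refine intervalIntegral.integral_congr (fun u hu => ?_)
      rw [Set.uIcc_of_le (by norm_num : (0:ℝ) ≤ 1)] at hu
      rw [abs_of_nonneg hu.1]
    rw [this, intervalIntegral.integral_const_mul, integral_id]
    norm_num
  rw [h1, h2]; norm_num

lemma J2_val : ∫ u in Set.Ioo (-1:ℝ) 1, 2 * |u| * Real.logb 2 (2 * |u|)
    = 2 - 1 / Real.log 2 := by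
  have hlog2 : Real.log 2 ≠ 0 := Real.log_ne_zero_of_pos_of_ne_one two_pos (by norm_num)
  set q : ℝ → ℝ := fun u => 2 * |u| * Real.logb 2 (2 * |u|) with hq
  have hqcont : ContinuousOn q (Set.Icc (-1:ℝ) 1) := by
    have habs : ContinuousOn (fun u : ℝ => |u|) (Set.Icc (-1:ℝ) 1) :=
      continuous_abs.continuousOn
    have hmaps : Set.MapsTo (fun u : ℝ => |u|) (Set.Icc (-1:ℝ) 1) (Set.Icc (0:ℝ) 1) := by
      intro u hu
      exact ⟨abs_nonneg u, abs_le.mpr ⟨hu.1, hu.2⟩⟩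
    have : ContinuousOn (fun v : ℝ => 2 * v * Real.log (2*v) / Real.log 2)
        (Set.Icc (0:ℝ) 1) := contOn_psi.div_const _
    refine ((this.comp habs hmaps).congr (fun u _ => ?_))
    simp only [Function.comp, hq]
    rw [← Real.log_div_log]
    ring
  have hsplit : ∫ u in Set.Ioo (-1:ℝ) 1, q u = (∫ u in (-1:ℝ)..0, q u) + ∫ u in (0:ℝ)..1, q u := by
    rw [← integral_Ioc_eq_integral_Ioo,
      ← intervalIntegral.integral_of_le (by norm_num : (-1:ℝ) ≤ 1)]
    rw [← intervalIntegral.integral_add_adjacent_intervals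
      (a := (-1:ℝ)) (b := 0) (c := 1) ?h1 ?h2]
    case h1 =>
      apply ContinuousOn.intervalIntegrable
      exact hqcont.mono (by rw [Set.uIcc_of_le (by norm_num : (-1:ℝ) ≤ 0)]
                            exact Set.Icc_subset_Icc le_rfl (by norm_num))
    case h2 =>
      apply ContinuousOn.intervalIntegrable
      exact hqcont.mono (by rw [Set.uIcc_of_le (by norm_num : (0:ℝ) ≤ 1)]
                            exact Set.Icc_subset_Icc (by norm_num) le_rfl)
  have hright : ∫ u in (0:ℝ)..1, q u = (Real.log 2 - 1/2) / Real.log 2 := by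
    have hcg : ∫ u in (0:ℝ)..1, q u = ∫ u in (0:ℝ)..1, 2 * u * Real.log (2*u) / Real.log 2 := by
      refine intervalIntegral.integral_congr (fun u hu => ?_)
      rw [Set.uIcc_of_le (by norm_num : (0:ℝ) ≤ 1)] at hu
      simp only [hq, abs_of_nonneg hu.1]
      rw [← Real.log_div_log]
      ring
    rw [hcg, intervalIntegral.integral_div, N_val]
  have hleft : ∫ u in (-1:ℝ)..0, q u = ∫ u in (0:ℝ)..1, q u := by
    have h := intervalIntegral.integral_comp_neg (a := (0:ℝ)) (b := 1) q
    have hqq : ∀ u : ℝ, q (-u) = q u := fun u => by simp only [hq, abs_neg]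
    simp only [hqq] at h
    rw [h]
    norm_num
  rw [hsplit, hleft, hright]
  field_simp
  ring

lemma sigmaUniv : (volume : Measure E3).toSphere Set.univ = ENNReal.ofReal (4 * π) := by
  rw [Measure.toSphere_apply_univ, EuclideanSpace.volume_ball]
  have h3 : Module.finrank ℝ E3 = 3 := finrank_euclideanSpace_fin
  rw [h3]
  have hcard : (Fintype.card (Fin 3) : ℝ) = 3 := by simp
  have hG : Real.Gamma ((Fintype.card (Fin 3) : ℝ) / 2 + 1) = 3 / 4 * Real.sqrt π := by
    rw [hcard]
    have h1 : (3:ℝ)/2 + 1 = (3/2) + 1 := by ring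
    rw [h1, Real.Gamma_add_one (by norm_num)]
    have h2 : (3:ℝ)/2 = 1/2 + 1 := by ring
    rw [h2, Real.Gamma_add_one (by norm_num), Real.Gamma_one_half_eq]
    ring
  rw [hG]
  have hs : Real.sqrt π ^ Fintype.card (Fin 3) = π * Real.sqrt π := by
    have h4 : Fintype.card (Fin 3) = 3 := by simp
    rw [h4]
    have := Real.sq_sqrt (le_of_lt Real.pi_pos)
    nlinarith [Real.sqrt_nonneg π]
  rw [hs]
  have hsp : Real.sqrt π > 0 := Real.sqrt_pos.mpr Real.pi_pos
  have hval : π * Real.sqrt π / (3 / 4 * Real.sqrt π) = 4 * π / 3 := by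
    field_simp
  rw [hval, ENNReal.ofReal_one, one_pow, one_mul,
    show ((3:ℕ):ENNReal) = ENNReal.ofReal 3 by simp,
    ← ENNReal.ofReal_mul (by norm_num)]
  congr 1
  ring

lemma unifS2_univ : unifS2 Set.univ = 1 := by
  unfold unifS2
  have hne : ENNReal.ofReal (4 * π) ≠ 0 := (ENNReal.ofReal_pos.mpr (by positivity)).ne'
  rw [Measure.smul_apply, sigmaUniv, smul_eq_mul,
    ENNReal.inv_mul_cancel hne ENNReal.ofReal_ne_top]

lemma unif_inner (f : ℝ → ℝ) (hf : Measurable f) (C : ℝ) (hC : ∀ u, |f u| ≤ C)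
    (v : E3) (hv : ‖v‖ = 1) :
    ∫ ω : S2, f (inner ℝ (ω : EuclideanSpace ℝ (Fin 3)) v) ∂unifS2
      = (∫ u in Set.Ioo (-1:ℝ) 1, f u) / 2 := by
  unfold unifS2
  rw [integral_smul_measure]
  rw [show ∫ ω : S2, f (inner ℝ (ω : EuclideanSpace ℝ (Fin 3)) v)
        ∂(volume : Measure (EuclideanSpace ℝ (Fin 3))).toSphere
      = 2 * π * ∫ u in Set.Ioo (-1:ℝ) 1, f u from sphere_inner f hf C hC v hv]
  rw [ENNReal.toReal_inv, ENNReal.toReal_ofReal (by positivity), smul_eq_mul]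
  have hπ : π ≠ 0 := pi_ne_zero
  field_simp
  ring

lemma f2_bound (u : ℝ) :
    |2 * |cl u| * Real.logb 2 (2 * |cl u|)| ≤ (2 * Real.log 2 + 2) / Real.log 2 := by
  have hlog2 : (0:ℝ) < Real.log 2 := Real.log_pos one_lt_two
  set v := |cl u| with hv
  have hv0 : 0 ≤ v := abs_nonneg _
  have hv1 : v ≤ 1 := cl_abs_le u
  have hkey : |2 * v * Real.log (2 * v)| ≤ 2 * Real.log 2 + 2 := by
    rcases eq_or_lt_of_le hv0 with h0 | h0
    · rw [← h0]
      simp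
      positivity
    · have habs : |Real.log v * v| < 1 := Real.abs_log_mul_self_lt v h0 hv1
      have hsplit : 2 * v * Real.log (2 * v) = 2 * v * Real.log 2 + 2 * (Real.log v * v) := by
        rw [Real.log_mul two_ne_zero h0.ne']
        ring
      rw [hsplit]
      calc |2 * v * Real.log 2 + 2 * (Real.log v * v)|
          ≤ |2 * v * Real.log 2| + |2 * (Real.log v * v)| := abs_add_le _ _
        _ = 2 * v * Real.log 2 + 2 * |Real.log v * v| := by
            rw [abs_of_nonneg (by positivity), abs_mul, abs_of_nonneg (by norm_num : (0:ℝ) ≤ 2)]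
        _ ≤ 2 * Real.log 2 + 2 := by nlinarith
  have heq : 2 * v * Real.logb 2 (2 * v) = 2 * v * Real.log (2 * v) / Real.log 2 := by
    rw [← Real.log_div_log]
    ring
  rw [heq, abs_div, abs_of_pos hlog2]
  gcongr


/-- let x be uniform on S² and let λ have conditional density
`|λ·x|/(2π)` with respect to the surface measure given x (equivalently, density
`2|λ·x|` with respect to the uniform probability measure `unifS2`).  Then the
marginal of λ is uniform on the sphere (its density with respect to `unifS2` is
constantly 1), and the mutual information
`I(x:λ) = ∫∫ 2|λ·x| log₂(2|λ·x|) dσ(λ) dσ(x)` equals `1 − 1/(2 ln 2)` bits. -/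
theorem stmt9 :
    (∀ l : S2, ∫ x : S2, 2 * |dotS2 x l| ∂unifS2 = 1) ∧
    ∫ x : S2, ∫ l : S2, 2 * |dotS2 x l| * Real.logb 2 (2 * |dotS2 x l|) ∂unifS2 ∂unifS2
      = 1 - 1 / (2 * Real.log 2) := by
  have hlog2 : (0:ℝ) < Real.log 2 := Real.log_pos one_lt_two
  have hdot : ∀ x l : S2, |dotS2 x l| ≤ 1 := by
    intro x l
    have h := abs_real_inner_le_norm (x : EuclideanSpace ℝ (Fin 3)) (l : EuclideanSpace ℝ (Fin 3))
    rw [mem_sphere_zero_iff_norm.mp x.2, mem_sphere_zero_iff_norm.mp l.2] at h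
    simpa [dotS2] using h
  -- f₁
  set f₁ : ℝ → ℝ := fun u => 2 * |cl u| with hf₁def
  have hf₁ : Measurable f₁ := (cl_meas.abs).const_mul 2
  have hf₁b : ∀ u, |f₁ u| ≤ 2 := by
    intro u
    rw [hf₁def, abs_mul, abs_of_nonneg (by norm_num : (0:ℝ) ≤ 2), abs_abs]
    nlinarith [cl_abs_le u]
  have hJ₁ : ∫ u in Set.Ioo (-1:ℝ) 1, f₁ u = 2 := by
    rw [setIntegral_congr_fun measurableSet_Ioo (g := fun u : ℝ => 2 * |u|)
      (fun u hu => by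
        simp only [hf₁def]
        have : |u| ≤ 1 := abs_le.mpr ⟨le_of_lt hu.1, le_of_lt hu.2⟩
        rw [cl_eq this])]
    exact J1_val
  -- f₂
  set f₂ : ℝ → ℝ := fun u => 2 * |cl u| * Real.logb 2 (2 * |cl u|) with hf₂def
  have hf₂ : Measurable f₂ := by
    have h1 : Measurable fun u : ℝ => 2 * |cl u| := (cl_meas.abs).const_mul 2
    have h2 : (fun u : ℝ => Real.logb 2 (2 * |cl u|)) =
        fun u : ℝ => Real.log (2 * |cl u|) / Real.log 2 :=
      funext fun u => (Real.log_div_log).symm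
    exact h1.mul (h2 ▸ (Real.measurable_log.comp h1).div_const _)
  have hf₂b : ∀ u, |f₂ u| ≤ (2 * Real.log 2 + 2) / Real.log 2 := f2_bound
  have hJ₂ : ∫ u in Set.Ioo (-1:ℝ) 1, f₂ u = 2 - 1 / Real.log 2 := by
    rw [setIntegral_congr_fun measurableSet_Ioo
      (g := fun u : ℝ => 2 * |u| * Real.logb 2 (2 * |u|))
      (fun u hu => by
        simp only [hf₂def]
        have : |u| ≤ 1 := abs_le.mpr ⟨le_of_lt hu.1, le_of_lt hu.2⟩
        rw [cl_eq this])]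
    exact J2_val
  constructor
  · intro l
    have hl : ‖(l : EuclideanSpace ℝ (Fin 3))‖ = 1 := mem_sphere_zero_iff_norm.mp l.2
    have hpt : ∀ x : S2, 2 * |dotS2 x l| =
        f₁ (inner ℝ (x : EuclideanSpace ℝ (Fin 3)) (l : EuclideanSpace ℝ (Fin 3))) := by
      intro x
      simp only [hf₁def]
      have : cl (inner ℝ (x : EuclideanSpace ℝ (Fin 3)) (l : EuclideanSpace ℝ (Fin 3))) =
          inner ℝ (x : EuclideanSpace ℝ (Fin 3)) (l : EuclideanSpace ℝ (Fin 3)) :=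
        cl_eq (hdot x l)
      rw [this]
      rw [show (dotS2 x l : ℝ) = inner ℝ (x : EuclideanSpace ℝ (Fin 3))
        (l : EuclideanSpace ℝ (Fin 3)) from rfl]
    rw [integral_congr_ae (Filter.Eventually.of_forall hpt),
      unif_inner f₁ hf₁ 2 hf₁b _ hl, hJ₁]
    norm_num
  · have hinner : ∀ x : S2,
        ∫ l : S2, 2 * |dotS2 x l| * Real.logb 2 (2 * |dotS2 x l|) ∂unifS2
          = 1 - 1 / (2 * Real.log 2) := by
      intro x
      have hx : ‖(x : EuclideanSpace ℝ (Fin 3))‖ = 1 := mem_sphere_zero_iff_norm.mp x.2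
      have hpt : ∀ l : S2, 2 * |dotS2 x l| * Real.logb 2 (2 * |dotS2 x l|) =
          f₂ (inner ℝ (l : EuclideanSpace ℝ (Fin 3)) (x : EuclideanSpace ℝ (Fin 3))) := by
        intro l
        simp only [hf₂def]
        have hcomm : (inner ℝ (l : EuclideanSpace ℝ (Fin 3)) (x : EuclideanSpace ℝ (Fin 3)) : ℝ)
            = dotS2 x l := real_inner_comm _ _
        rw [hcomm, cl_eq (hdot x l)]
      rw [integral_congr_ae (Filter.Eventually.of_forall hpt),
        unif_inner f₂ hf₂ _ hf₂b _ hx, hJ₂]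
      have hL : Real.log 2 ≠ 0 := hlog2.ne'
      rw [div_eq_iff (two_ne_zero : (2:ℝ) ≠ 0)]
      field_simp
    rw [integral_congr_ae (Filter.Eventually.of_forall hinner), integral_const, measureReal_def, unifS2_univ]
    simp
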